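/- For the Benjamini–Hochberg step-up test with critical values α_i = iα/m applied to p-values (p_1,…,p_m), the false discovery rate FDR = E[V/max(R,1)] satisfies FDR ≤ (m_0/m)·α, where m_0 is the number of true null hypotheses. -/

import Mathlib

open MeasureTheory ProbabilityTheory Finset
open scoped Classical
noncomputable section

/-- `#{i : p i ≤ t}`, i.e. `m·F̂_m(t)`. -/
def countLE {m : ℕ} (p : Fin m → ℝ) (t : ℝ) : ℕ :=
  (Finset.univ.filter (fun i => p i ≤ t)).card

/-- The `i`-th order statistic `p_{i:m}` (for `1 ≤ i ≤ m`), characterized by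
`p_{i:m} ≤ t ↔ i ≤ #{k : p k ≤ t}`. -/
def orderStat {m : ℕ} (p : Fin m → ℝ) (i : ℕ) : ℝ :=
  sInf {t | i ≤ countLE p t}

/-- Step-up rejection number `R = max {j : p_{j:m} ≤ α_j}` (`max ∅ = 0`). -/
def suR {m : ℕ} (α : ℕ → ℝ) (p : Fin m → ℝ) : ℕ :=
  (((Finset.range (m+1)).filter (fun j => 1 ≤ j ∧ orderStat p j ≤ α j)).max).unbotD 0

/-- Step-down rejection number `R = max {j : p_{i:m} ≤ α_i for all i ≤ j}`. -/
def sdR {m : ℕ} (α : ℕ → ℝ) (p : Fin m → ℝ) : ℕ :=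
  (((Finset.range (m+1)).filter
    (fun j => ∀ i ∈ Finset.Icc 1 j, orderStat p i ≤ α i)).max).unbotD 0

/-- FDR `= E[V / max(R,1)]` for rejection number `R` and rejection rule `rej`. -/
def FDR {Ω : Type*} [MeasurableSpace Ω] (μ : Measure Ω) {m : ℕ}
    (p : Ω → Fin m → ℝ) (I0 : Finset (Fin m))
    (R : (Fin m → ℝ) → ℕ) (rej : (Fin m → ℝ) → Fin m → Prop) : ℝ :=
  ∫ ω, ((I0.filter (fun i => rej (p ω) i)).card : ℝ) / (max (R (p ω)) 1 : ℕ) ∂μ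

/-- FDR of the step-up test with critical values `α`. -/
def suFDR {Ω : Type*} [MeasurableSpace Ω] (μ : Measure Ω) {m : ℕ}
    (α : ℕ → ℝ) (p : Ω → Fin m → ℝ) (I0 : Finset (Fin m)) : ℝ :=
  FDR μ p I0 (suR α) (fun q i => q i ≤ α (suR α q))

/-- FDR of the step-down test with critical values `α`
(rejecting the hypotheses belonging to `p_{i:m}`, `i ≤ R`). -/
def sdFDR {Ω : Type*} [MeasurableSpace Ω] (μ : Measure Ω) {m : ℕ}
    (α : ℕ → ℝ) (p : Ω → Fin m → ℝ) (I0 : Finset (Fin m)) : ℝ :=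
  FDR μ p I0 (sdR α) (fun q i => 1 ≤ sdR α q ∧ q i ≤ orderStat q (sdR α q))

/-- Benjamini–Hochberg critical values `b_j = jα/m`. -/
def bh (m : ℕ) (α : ℝ) (j : ℕ) : ℝ := j * α / m

/-- The uniform distribution on `[0,1]`. -/
def unif01 : Measure ℝ := volume.restrict (Set.Icc 0 1)

section Aux

variable {m : ℕ}

lemma countLE_mono (q : Fin m → ℝ) {s t : ℝ} (hst : s ≤ t) : countLE q s ≤ countLE q t :=
  Finset.card_le_card (Finset.monotone_filter_right _ (fun i _ hi => le_trans hi hst))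

lemma countLE_le (q : Fin m → ℝ) (t : ℝ) : countLE q t ≤ m := by
  simpa [countLE] using Finset.card_le_card (Finset.filter_subset (fun i => q i ≤ t) Finset.univ)

lemma le_countLE_iff {q : Fin m → ℝ} {j : ℕ} {t : ℝ} :
    j ≤ countLE q t ↔ ∃ A : Finset (Fin m), A.card = j ∧ ∀ i ∈ A, q i ≤ t := by
  constructor
  · intro h
    obtain ⟨A, hA, hcard⟩ := Finset.exists_subset_card_eq h
    exact ⟨A, hcard, fun i hi => (Finset.mem_filter.1 (hA hi)).2⟩
  · rintro ⟨A, hcard, hA⟩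
    calc j = A.card := hcard.symm
    _ ≤ countLE q t := Finset.card_le_card (fun i hi => Finset.mem_filter.2 ⟨Finset.mem_univ _, hA i hi⟩)

lemma orderStat_le_iff (hm : 1 ≤ m) {q : Fin m → ℝ} {j : ℕ} (hj1 : 1 ≤ j) (hjm : j ≤ m)
    {t : ℝ} : orderStat q j ≤ t ↔ j ≤ countLE q t := by
  have hne : (Finset.univ : Finset (Fin m)).Nonempty := by
    simpa [Finset.univ_nonempty_iff] using Fin.pos_iff_nonempty.1 hm
  set S : Set ℝ := {s | j ≤ countLE q s} with hS
  have hSeq : S = ⋃ (A : Finset (Fin m)) (_ : A.card = j), ⋂ i ∈ A, Set.Ici (q i) := by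
    ext s
    simp only [hS, Set.mem_setOf_eq, le_countLE_iff, Set.mem_iUnion, Set.mem_iInter,
      Set.mem_Ici]
    tauto
  have hclosed : IsClosed S := by
    rw [hSeq]
    refine isClosed_iUnion_of_finite (fun A => isClosed_iUnion_of_finite (fun _ => ?_))
    exact isClosed_biInter (fun i _ => isClosed_Ici)
  have hSne : S.Nonempty := by
    refine ⟨Finset.univ.sup' hne q, ?_⟩
    have : Finset.univ.filter (fun i => q i ≤ Finset.univ.sup' hne q) = Finset.univ := by
      refine Finset.filter_eq_self.2 (fun i _ => Finset.le_sup' q (Finset.mem_univ i))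
    simp only [hS, Set.mem_setOf_eq, countLE, this, Finset.card_univ, Fintype.card_fin]
    exact hjm
  have hSbdd : BddBelow S := by
    refine ⟨Finset.univ.inf' hne q, fun s hs => ?_⟩
    have hcard : 0 < (Finset.univ.filter (fun i => q i ≤ s)).card := lt_of_lt_of_le hj1 hs
    obtain ⟨i, hi⟩ := Finset.card_pos.1 hcard
    exact le_trans (Finset.inf'_le q (Finset.mem_univ i)) (Finset.mem_filter.1 hi).2
  constructor
  · intro h
    have hmem : sInf S ∈ S := hclosed.csInf_mem hSne hSbdd
    exact le_trans hmem (countLE_mono q h)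
  · intro h
    exact csInf_le hSbdd h

/-- The set of candidate rejection numbers for the step-up test. -/
def suT (α : ℕ → ℝ) (q : Fin m → ℝ) : Finset ℕ :=
  (Finset.range (m+1)).filter (fun j => 1 ≤ j ∧ orderStat q j ≤ α j)

lemma suR_eq_unbot' (α : ℕ → ℝ) (q : Fin m → ℝ) : suR α q = (suT α q).max.unbotD 0 := rfl

lemma le_suR_of_mem {α : ℕ → ℝ} {q : Fin m → ℝ} {j : ℕ} (hj : j ∈ suT α q) :
    j ≤ suR α q := by
  have hne : (suT α q).Nonempty := ⟨j, hj⟩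
  rw [suR_eq_unbot', ← Finset.coe_max' hne, WithBot.unbotD_coe]
  exact Finset.le_max' _ j hj

lemma suR_mem_of_ne {α : ℕ → ℝ} {q : Fin m → ℝ} (h : suT α q ≠ ∅) :
    suR α q ∈ suT α q := by
  have hne : (suT α q).Nonempty := Finset.nonempty_iff_ne_empty.2 h
  rw [suR_eq_unbot', ← Finset.coe_max' hne, WithBot.unbotD_coe]
  exact Finset.max'_mem _ hne

lemma suR_eq_zero_of_empty {α : ℕ → ℝ} {q : Fin m → ℝ} (h : suT α q = ∅) :
    suR α q = 0 := by
  rw [suR_eq_unbot', h]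
  rfl

lemma suR_le (α : ℕ → ℝ) (q : Fin m → ℝ) : suR α q ≤ m := by
  by_cases h : suT α q = ∅
  · simp [suR_eq_zero_of_empty h]
  · have := suR_mem_of_ne h
    have hmem := Finset.mem_filter.1 this
    exact Nat.lt_succ_iff.1 (Finset.mem_range.1 hmem.1)

lemma suR_mem_of_pos {α : ℕ → ℝ} {q : Fin m → ℝ} (h : 1 ≤ suR α q) :
    suR α q ∈ suT α q := by
  by_cases he : suT α q = ∅
  · rw [suR_eq_zero_of_empty he] at h; omega
  · exact suR_mem_of_ne he

lemma bh_nonneg {α : ℝ} (hα : 0 ≤ α) (j : ℕ) : 0 ≤ bh m α j := by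
  unfold bh; positivity

lemma bh_mono {α : ℝ} (hα : 0 ≤ α) {j k : ℕ} (hjk : j ≤ k) : bh m α j ≤ bh m α k := by
  unfold bh
  have hc : (j : ℝ) ≤ (k : ℝ) := by exact_mod_cast hjk
  gcongr


lemma countLE_update_zero_eq {q : Fin m → ℝ} {i : Fin m} {t : ℝ} (ht : 0 ≤ t)
    (hqi : q i ≤ t) : countLE (Function.update q i 0) t = countLE q t := by
  unfold countLE
  congr 1
  apply Finset.filter_congr
  intro j _
  by_cases hj : j = i
  · subst hj; simp [ht, hqi]
  · simp [Function.update_of_ne hj]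

lemma countLE_le_update {q : Fin m → ℝ} {i : Fin m} (hqi : 0 ≤ q i) (t : ℝ) :
    countLE q t ≤ countLE (Function.update q i 0) t := by
  apply Finset.card_le_card
  intro j hj
  have hj' := Finset.mem_filter.1 hj
  refine Finset.mem_filter.2 ⟨Finset.mem_univ _, ?_⟩
  by_cases h : j = i
  · subst h; simp only [Function.update_self]; linarith [hj'.2]
  · simpa [Function.update_of_ne h] using hj'.2

lemma suR_le_suR_update (hm : 1 ≤ m) {α : ℝ} (hα : 0 ≤ α) {q : Fin m → ℝ} {i : Fin m}
    (hqi : 0 ≤ q i) : suR (bh m α) q ≤ suR (bh m α) (Function.update q i 0) := by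
  by_cases he : suT (bh m α) q = ∅
  · simp [suR_eq_zero_of_empty he]
  · have hmem := Finset.mem_filter.1 (suR_mem_of_ne he)
    set r := suR (bh m α) q
    have hr1 : 1 ≤ r := hmem.2.1
    have hrm : r ≤ m := Nat.lt_succ_iff.1 (Finset.mem_range.1 hmem.1)
    refine le_suR_of_mem (Finset.mem_filter.2 ⟨hmem.1, hr1, ?_⟩)
    rw [orderStat_le_iff hm hr1 hrm]
    refine le_trans ?_ (countLE_le_update hqi _)
    rw [← orderStat_le_iff hm hr1 hrm]
    exact hmem.2.2

lemma one_le_suR_update (hm : 1 ≤ m) {α : ℝ} (hα : 0 ≤ α) (q : Fin m → ℝ) (i : Fin m) :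
    1 ≤ suR (bh m α) (Function.update q i 0) := by
  refine le_suR_of_mem (Finset.mem_filter.2 ⟨Finset.mem_range.2 (by omega), le_refl 1, ?_⟩)
  rw [orderStat_le_iff hm le_rfl hm]
  have : i ∈ Finset.univ.filter (fun j => Function.update q i 0 j ≤ bh m α 1) :=
    Finset.mem_filter.2 ⟨Finset.mem_univ _, by simp [bh_nonneg hα 1]⟩
  exact Finset.card_pos.2 ⟨i, this⟩

/-- Key deterministic lemma: if `p_i` is below the critical value of the rejection number of
the modified vector, then zeroing `p_i` does not change the rejection number. -/
lemma suR_update_eq (hm : 1 ≤ m) {α : ℝ} (hα : 0 ≤ α) {q : Fin m → ℝ} {i : Fin m}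
    (hqi : 0 ≤ q i) (h : q i ≤ bh m α (suR (bh m α) (Function.update q i 0))) :
    suR (bh m α) q = suR (bh m α) (Function.update q i 0) := by
  set r := suR (bh m α) q with hr
  set r' := suR (bh m α) (Function.update q i 0) with hr'
  have hle : r ≤ r' := suR_le_suR_update hm hα hqi
  have hr'1 : 1 ≤ r' := one_le_suR_update hm hα q i
  refine le_antisymm hle ?_
  have hmem := Finset.mem_filter.1 (suR_mem_of_pos (α := bh m α) hr'1)
  have hr'm : r' ≤ m := suR_le _ _
  have hcount : r' ≤ countLE (Function.update q i 0) (bh m α r') :=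
    (orderStat_le_iff hm hr'1 hr'm).1 hmem.2.2
  rw [countLE_update_zero_eq (bh_nonneg hα r') h] at hcount
  refine le_suR_of_mem (Finset.mem_filter.2 ⟨Finset.mem_range.2 (by omega), hr'1, ?_⟩)
  exact (orderStat_le_iff hm hr'1 hr'm).2 hcount

lemma suR_eq_iff_update (hm : 1 ≤ m) {α : ℝ} (hα : 0 ≤ α) {q : Fin m → ℝ} {i : Fin m}
    (hqi : 0 ≤ q i) {k : ℕ} (hk : 1 ≤ k) (hqk : q i ≤ bh m α k) :
    suR (bh m α) q = k ↔ suR (bh m α) (Function.update q i 0) = k := by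
  constructor
  · intro h
    have hle : suR (bh m α) q ≤ suR (bh m α) (Function.update q i 0) :=
      suR_le_suR_update hm hα hqi
    have : q i ≤ bh m α (suR (bh m α) (Function.update q i 0)) :=
      le_trans hqk (bh_mono hα (h ▸ hle))
    rw [← suR_update_eq hm hα hqi this]
    exact h
  · intro h
    have : q i ≤ bh m α (suR (bh m α) (Function.update q i 0)) := h ▸ hqk
    rw [suR_update_eq hm hα hqi this]
    exact h

lemma one_le_suR_of_rej (hm : 1 ≤ m) {α : ℝ} (hα : 0 ≤ α) {q : Fin m → ℝ} {i : Fin m}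
    (hqi : 0 ≤ q i) (h : q i ≤ bh m α (suR (bh m α) q)) : 1 ≤ suR (bh m α) q := by
  by_contra hc
  push_neg at hc
  have hr : suR (bh m α) q = 0 := by omega
  rw [hr] at h
  simp only [bh, Nat.cast_zero, zero_mul, zero_div] at h
  have hq0 : q i = 0 := le_antisymm h hqi
  have : 1 ≤ suR (bh m α) q := by
    refine le_suR_of_mem (Finset.mem_filter.2 ⟨Finset.mem_range.2 (by omega), le_rfl, ?_⟩)
    rw [orderStat_le_iff hm le_rfl hm]
    have : i ∈ Finset.univ.filter (fun j => q j ≤ bh m α 1) :=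
      Finset.mem_filter.2 ⟨Finset.mem_univ _, by rw [hq0]; exact bh_nonneg hα 1⟩
    exact Finset.card_pos.2 ⟨i, this⟩
  omega

lemma mem_suT {α : ℕ → ℝ} {q : Fin m → ℝ} {j : ℕ} :
    j ∈ suT α q ↔ 1 ≤ j ∧ j ≤ m ∧ orderStat q j ≤ α j := by
  simp only [suT, Finset.mem_filter, Finset.mem_range, Nat.lt_succ_iff]
  tauto

lemma measurable_countLE (t : ℝ) : Measurable (fun q : Fin m → ℝ => countLE q t) := by
  unfold countLE
  simp_rw [Finset.card_filter]
  exact Finset.measurable_sum _ fun i _ =>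
    Measurable.ite ((measurable_pi_apply i) measurableSet_Iic) measurable_const measurable_const

lemma measurableSet_orderStat_le (hm : 1 ≤ m) {j : ℕ} (hj1 : 1 ≤ j) (hjm : j ≤ m) (c : ℝ) :
    MeasurableSet {q : Fin m → ℝ | orderStat q j ≤ c} := by
  have h : {q : Fin m → ℝ | orderStat q j ≤ c} = (fun q => countLE q c) ⁻¹' (Set.Ici j) := by
    ext q
    simp [orderStat_le_iff hm hj1 hjm, Set.mem_Ici]
  rw [h]
  exact measurable_countLE c measurableSet_Ici

lemma suR_eq_iff_key {α : ℕ → ℝ} {q : Fin m → ℝ} {k : ℕ} :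
    suR α q = k ↔
      ((k = 0 ∧ ∀ j ∈ Finset.Icc 1 m, ¬ orderStat q j ≤ α j) ∨
       (1 ≤ k ∧ k ≤ m ∧ orderStat q k ≤ α k ∧
        ∀ j ∈ Finset.Icc 1 m, orderStat q j ≤ α j → j ≤ k)) := by
  by_cases he : suT α q = ∅
  · have h0 : suR α q = 0 := suR_eq_zero_of_empty he
    constructor
    · intro h
      subst h
      refine Or.inl ⟨h0.symm ▸ rfl, fun j hj hord => ?_⟩
      rw [Finset.mem_Icc] at hj
      exact (Finset.notMem_empty j) (he ▸ mem_suT.2 ⟨hj.1, hj.2, hord⟩)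
    · rintro (⟨hk, _⟩ | ⟨hk1, hkm, hord, _⟩)
      · omega
      · exact absurd (he ▸ mem_suT.2 ⟨hk1, hkm, hord⟩) (Finset.notMem_empty k)
  · have hmem := mem_suT.1 (suR_mem_of_ne he)
    constructor
    · intro h
      subst h
      refine Or.inr ⟨hmem.1, hmem.2.1, hmem.2.2, fun j hj hord => ?_⟩
      rw [Finset.mem_Icc] at hj
      exact le_suR_of_mem (mem_suT.2 ⟨hj.1, hj.2, hord⟩)
    · rintro (⟨hk, hall⟩ | ⟨hk1, hkm, hord, hall⟩)
      · exact absurd hmem.2.2 (hall _ (Finset.mem_Icc.2 ⟨hmem.1, hmem.2.1⟩))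
      · refine le_antisymm
          (hall _ (Finset.mem_Icc.2 ⟨hmem.1, hmem.2.1⟩) hmem.2.2)
          (le_suR_of_mem (mem_suT.2 ⟨hk1, hkm, hord⟩))

lemma measurable_suR (hm : 1 ≤ m) (α : ℕ → ℝ) :
    Measurable (suR α : (Fin m → ℝ) → ℕ) := by
  apply measurable_to_countable'
  intro k
  have hpre : (suR α : (Fin m → ℝ) → ℕ) ⁻¹' {k} =
      ({q : Fin m → ℝ | k = 0} ∩ ⋂ j ∈ Finset.Icc 1 m, {q | ¬ orderStat q j ≤ α j}) ∪
      ({q | 1 ≤ k} ∩ {q | k ≤ m} ∩ {q | orderStat q k ≤ α k} ∩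
        ⋂ j ∈ Finset.Icc 1 m, ({q | ¬ orderStat q j ≤ α j} ∪ {q | j ≤ k})) := by
    ext q
    simp only [Set.mem_preimage, Set.mem_singleton_iff, suR_eq_iff_key, Set.mem_union,
      Set.mem_inter_iff, Set.mem_iInter, Set.mem_setOf_eq]
    constructor
    · rintro (⟨h1, h2⟩ | ⟨h1, h2, h3, h4⟩)
      · exact Or.inl ⟨h1, h2⟩
      · exact Or.inr ⟨⟨⟨h1, h2⟩, h3⟩, fun j hj => or_iff_not_imp_left.2 fun hc =>
          h4 j hj (not_not.1 hc)⟩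
    · rintro (⟨h1, h2⟩ | ⟨⟨⟨h1, h2⟩, h3⟩, h4⟩)
      · exact Or.inl ⟨h1, h2⟩
      · exact Or.inr ⟨h1, h2, h3, fun j hj hord => ((h4 j hj).resolve_left (not_not.2 hord))⟩
  rw [hpre]
  have hconst : ∀ (P : Prop), MeasurableSet {_q : Fin m → ℝ | P} := by
    intro P
    by_cases hP : P
    · simp [hP]
    · simp [hP]
  have hord : ∀ j ∈ Finset.Icc 1 m, MeasurableSet {q : Fin m → ℝ | orderStat q j ≤ α j} := by
    intro j hj
    rw [Finset.mem_Icc] at hj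
    exact measurableSet_orderStat_le hm hj.1 hj.2 _
  refine MeasurableSet.union ?_ ?_
  · exact (hconst _).inter (MeasurableSet.biInter (Finset.Icc 1 m).countable_toSet
      fun j hj => (hord j hj).compl)
  · refine MeasurableSet.inter ?_ ?_
    · by_cases hk1 : 1 ≤ k
      · by_cases hkm : k ≤ m
        · exact ((hconst _).inter (hconst _)).inter (measurableSet_orderStat_le hm hk1 hkm _)
        · simp [hkm]
      · simp [hk1]
    · exact MeasurableSet.biInter (Finset.Icc 1 m).countable_toSet
        fun j hj => (hord j hj).compl.union (hconst _)

lemma fdp_pointwise (hm : 1 ≤ m) {α : ℝ} (hα : 0 ≤ α) {q : Fin m → ℝ}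
    (hq : ∀ i, 0 ≤ q i) (I0 : Finset (Fin m)) :
    ((I0.filter (fun i => q i ≤ bh m α (suR (bh m α) q))).card : ℝ)
      / ((max (suR (bh m α) q) 1 : ℕ) : ℝ)
    = ∑ i ∈ I0, ∑ k ∈ Finset.Icc 1 m,
        (if q i ≤ bh m α k ∧ suR (bh m α) (Function.update q i 0) = k
          then ((k : ℝ))⁻¹ else 0) := by
  rw [Finset.card_filter]
  push_cast
  rw [Finset.sum_div]
  refine Finset.sum_congr rfl fun i _ => ?_
  rcases Nat.eq_zero_or_pos (suR (bh m α) q) with hr0 | hr1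
  · have hnotrej : ¬ q i ≤ bh m α (suR (bh m α) q) := by
      intro h
      have := one_le_suR_of_rej hm hα (hq i) h
      omega
    rw [if_neg hnotrej, zero_div]
    refine (Finset.sum_eq_zero fun k hk => ?_).symm
    rw [Finset.mem_Icc] at hk
    rw [if_neg]
    rintro ⟨h1, h2⟩
    have := (suR_eq_iff_update hm hα (hq i) hk.1 h1).2 h2
    omega
  · set r := suR (bh m α) q with hr
    have hrm : r ≤ m := suR_le _ _
    have hmax : ((r : ℝ) ⊔ 1) = (r : ℝ) := by
      rw [max_eq_left]
      exact_mod_cast hr1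
    rw [hmax]
    rw [Finset.sum_eq_single_of_mem r (Finset.mem_Icc.2 ⟨hr1, hrm⟩)]
    · by_cases hqr : q i ≤ bh m α r
      · rw [if_pos hqr, if_pos ⟨hqr, (suR_eq_iff_update hm hα (hq i) hr1 hqr).1 rfl⟩, one_div]
      · rw [if_neg hqr, if_neg (fun h => hqr h.1), zero_div]
    · intro k hk hkr
      rw [Finset.mem_Icc] at hk
      rw [if_neg]
      rintro ⟨h1, h2⟩
      exact hkr ((suR_eq_iff_update hm hα (hq i) hk.1 h1).2 h2).symm

/-- If `X ⊥ Y` and `(X,Y) ⊥ Z`, then `X ⊥ (Y,Z)`. -/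
theorem indepFun_pair_right_aux {Ω' βX βY βZ : Type*} {mΩ : MeasurableSpace Ω'}
    {mX : MeasurableSpace βX} {mY : MeasurableSpace βY} {mZ : MeasurableSpace βZ}
    {μ : Measure Ω'} [IsProbabilityMeasure μ]
    {X : Ω' → βX} {Y : Ω' → βY} {Z : Ω' → βZ}
    (hX : Measurable X) (hY : Measurable Y) (hZ : Measurable Z)
    (h1 : IndepFun X Y μ) (h2 : IndepFun (fun ω => (X ω, Y ω)) Z μ) :
    IndepFun X (fun ω => (Y ω, Z ω)) μ := by
  have hYZ : IndepFun Y Z μ := h2.comp measurable_snd measurable_id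
  have h1' := indepFun_iff_measure_inter_preimage_eq_mul.1 h1
  have h2' := indepFun_iff_measure_inter_preimage_eq_mul.1 h2
  have hYZ' := indepFun_iff_measure_inter_preimage_eq_mul.1 hYZ
  show Indep (MeasurableSpace.comap X mX)
    (MeasurableSpace.comap (fun ω => (Y ω, Z ω)) Prod.instMeasurableSpace) μ
  have hgen1 : MeasurableSpace.comap X mX
      = MeasurableSpace.generateFrom
        (Set.preimage X '' {s : Set βX | MeasurableSet s}) := by
    conv_lhs => rw [← @MeasurableSpace.generateFrom_measurableSet βX mX]
    exact MeasurableSpace.comap_generateFrom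
  have hgen2 : MeasurableSpace.comap (fun ω => (Y ω, Z ω)) Prod.instMeasurableSpace
      = MeasurableSpace.generateFrom (Set.preimage (fun ω => (Y ω, Z ω)) ''
          (Set.image2 (· ×ˢ ·) {s : Set βY | MeasurableSet s} {t : Set βZ | MeasurableSet t})) := by
    conv_lhs => rw [← generateFrom_prod]
    exact MeasurableSpace.comap_generateFrom
  refine IndepSets.indep hX.comap_le (hY.prodMk hZ).comap_le ?_ ?_ hgen1 hgen2 ?_
  · exact IsPiSystem.comap MeasurableSpace.isPiSystem_measurableSet X
  · exact IsPiSystem.comap isPiSystem_prod _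
  · rw [IndepSets_iff]
    rintro _ _ ⟨A, hA, rfl⟩ ⟨_, ⟨B, hB, C, hC, rfl⟩, rfl⟩
    rw [Set.mk_preimage_prod]
    have e2 := h2' (A ×ˢ B) C (hA.prod hB) hC
    rw [Set.mk_preimage_prod, h1' A B hA hB] at e2
    rw [hYZ' B C hB hC, ← Set.inter_assoc, e2, mul_assoc]

end Aux

/-- The Benjamini–Hochberg step-up test controls the FDR:
under the basic independence assumptions (BI)(1)-(3), `FDR ≤ (m₀/m)·α`. -/
theorem bh_stepup_fdr_control
    {Ω : Type*} [MeasurableSpace Ω] (μ : Measure Ω) [IsProbabilityMeasure μ]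
    (m : ℕ) (hm : 1 ≤ m) (α : ℝ) (hα : α ∈ Set.Ioo (0:ℝ) 1)
    (I0 : Finset (Fin m)) (p : Ω → Fin m → ℝ)
    (hmeas : ∀ i, Measurable (fun ω => p ω i))
    (hrange : ∀ ω i, p ω i ∈ Set.Icc (0:ℝ) 1)
    -- (BI)(2): the true-null p-value vector is independent of the false-null one
    (hBI2 : IndepFun (fun ω (i : {i // i ∈ I0}) => p ω i)
      (fun ω (i : {i // i ∉ I0}) => p ω i) μ)
    -- (BI)(3): the true-null p-values are jointly independent ...
    (hBI3 : iIndepFun (fun (i : {i // i ∈ I0}) ω => p ω i.1) μ)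
    -- ... and stochastically larger than (or equal to) the uniform distribution
    (hstoch : ∀ i ∈ I0, ∀ x ∈ Set.Icc (0:ℝ) 1, μ {ω | p ω i ≤ x} ≤ ENNReal.ofReal x) :
    suFDR μ (bh m α) p I0 ≤ (I0.card : ℝ) / m * α := by
  classical
  obtain ⟨hα0, hα1⟩ := hα
  have hα0' : (0:ℝ) ≤ α := le_of_lt hα0
  have hq0 : ∀ ω (j : Fin m), 0 ≤ p ω j := fun ω j => (hrange ω j).1
  -- the modified rejection number `W j ω = R(p(ω) with p_j := 0)`
  have hupdmeas : ∀ j : Fin m, Measurable (fun ω => Function.update (p ω) j 0) := by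
    intro j
    apply measurable_pi_lambda
    intro j'
    by_cases hj : j' = j
    · subst hj
      simp only [Function.update_self]
      exact measurable_const
    · simp only [Function.update_of_ne hj]
      exact hmeas j'
  have hWmeas : ∀ j : Fin m, Measurable (fun ω => suR (bh m α) (Function.update (p ω) j 0)) :=
    fun j => (measurable_suR hm (bh m α)).comp (hupdmeas j)
  -- independence of `p_i` and `W i` for true nulls `i`
  have hindep : ∀ i ∈ I0, IndepFun (fun ω => p ω i)
      (fun ω => suR (bh m α) (Function.update (p ω) i 0)) μ := by
    intro i hi
    set i0 : {x // x ∈ I0} := ⟨i, hi⟩ with hi0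
    have hnullmeas : ∀ j : {x // x ∈ I0}, Measurable (fun ω => p ω j.1) := fun j => hmeas j.1
    have hdisj : Disjoint ({i0} : Finset {x // x ∈ I0}) (Finset.univ.erase i0) := by
      simp [Finset.disjoint_left]
    have hA := hBI3.indepFun_finset {i0} (Finset.univ.erase i0) hdisj hnullmeas
    have hXY : IndepFun (fun ω => p ω i)
        (fun ω (j : (Finset.univ.erase i0 : Finset {x // x ∈ I0})) => p ω (j : {x // x ∈ I0}).1)
        μ := by
      have hφ : Measurable (fun v : (∀ _ : ({i0} : Finset {x // x ∈ I0}), ℝ) =>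
          v ⟨i0, Finset.mem_singleton_self i0⟩) := measurable_pi_apply _
      exact hA.comp hφ measurable_id
    have hB : IndepFun
        (fun ω => (p ω i,
          fun j : (Finset.univ.erase i0 : Finset {x // x ∈ I0}) => p ω (j : {x // x ∈ I0}).1))
        (fun ω (j : {x // x ∉ I0}) => p ω j.1) μ := by
      have hψ : Measurable (fun v : ({x // x ∈ I0} → ℝ) =>
          (v i0, fun j : (Finset.univ.erase i0 : Finset {x // x ∈ I0}) =>
            v (j : {x // x ∈ I0}))) := by
        exact (measurable_pi_apply _).prodMk
          (measurable_pi_lambda _ fun j => measurable_pi_apply _)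
      exact hBI2.comp hψ measurable_id
    have hC : IndepFun (fun ω => p ω i)
        (fun ω => ((fun j : (Finset.univ.erase i0 : Finset {x // x ∈ I0}) =>
            p ω (j : {x // x ∈ I0}).1),
          (fun j : {x // x ∉ I0} => p ω j.1))) μ := by
      refine indepFun_pair_right_aux (hmeas i) ?_ ?_ hXY hB
      · exact measurable_pi_lambda _ fun j => hmeas _
      · exact measurable_pi_lambda _ fun j => hmeas _
    -- reconstruction map
    set e : ((∀ _ : (Finset.univ.erase i0 : Finset {x // x ∈ I0}), ℝ) × ({x // x ∉ I0} → ℝ))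
        → (Fin m → ℝ) := fun yz j =>
      if h0 : j ∈ I0 then
        (if hj : (⟨j, h0⟩ : {x // x ∈ I0}) ∈ Finset.univ.erase i0 then yz.1 ⟨⟨j, h0⟩, hj⟩ else 0)
      else yz.2 ⟨j, h0⟩ with he
    have he_meas : Measurable e := by
      apply measurable_pi_lambda
      intro j
      by_cases h0 : j ∈ I0
      · simp only [he, dif_pos h0]
        by_cases hj : (⟨j, h0⟩ : {x // x ∈ I0}) ∈ Finset.univ.erase i0
        · simp only [dif_pos hj]
          exact (measurable_pi_apply _).comp measurable_fst
        · simp only [dif_neg hj]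
          exact measurable_const
      · simp only [he, dif_neg h0]
        exact (measurable_pi_apply _).comp measurable_snd
    have he_eq : ∀ ω, e ((fun j : (Finset.univ.erase i0 : Finset {x // x ∈ I0}) =>
        p ω (j : {x // x ∈ I0}).1), (fun j : {x // x ∉ I0} => p ω j.1))
        = Function.update (p ω) i 0 := by
      intro ω
      funext j
      by_cases hji : j = i
      · subst hji
        rw [Function.update_self]
        simp only [he, dif_pos hi]
        rw [dif_neg]
        simp only [Finset.mem_erase, not_and]
        intro hne
        exact absurd rfl hne
      · rw [Function.update_of_ne hji]
        by_cases h0 : j ∈ I0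
        · have hmem : (⟨j, h0⟩ : {x // x ∈ I0}) ∈ Finset.univ.erase i0 :=
            Finset.mem_erase.2 ⟨fun h => hji (congrArg Subtype.val h), Finset.mem_univ _⟩
          simp only [he, dif_pos h0, dif_pos hmem]
        · simp only [he, dif_neg h0]
    have hfinal := hC.comp measurable_id ((measurable_suR hm (bh m α)).comp he_meas)
    have hfun : ((suR (bh m α) ∘ e) ∘ (fun ω =>
        ((fun j : (Finset.univ.erase i0 : Finset {x // x ∈ I0}) => p ω (j : {x // x ∈ I0}).1),
         (fun j : {x // x ∉ I0} => p ω j.1))))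
        = fun ω => suR (bh m α) (Function.update (p ω) i 0) := by
      funext ω
      simp only [Function.comp_apply]
      rw [he_eq ω]
    rw [hfun] at hfinal
    exact hfinal
  -- the events
  set E : Fin m → ℕ → Set Ω := fun j k =>
    {ω | p ω j ≤ bh m α k} ∩ {ω | suR (bh m α) (Function.update (p ω) j 0) = k} with hEdef
  have hEmeas : ∀ j k, MeasurableSet (E j k) := by
    intro j k
    refine MeasurableSet.inter ?_ ?_
    · exact (hmeas j) measurableSet_Iic
    · exact (hWmeas j) (measurableSet_singleton k)
  -- rewrite the FDR as a finite sum of measures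
  have key : suFDR μ (bh m α) p I0
      = ∑ i ∈ I0, ∑ k ∈ Finset.Icc 1 m, (μ (E i k)).toReal * ((k : ℝ))⁻¹ := by
    unfold suFDR FDR
    have hptw2 : (fun ω => ((I0.filter
          (fun i => p ω i ≤ bh m α (suR (bh m α) (p ω)))).card : ℝ)
            / ((max (suR (bh m α) (p ω)) 1 : ℕ) : ℝ))
        = fun ω => ∑ i ∈ I0, ∑ k ∈ Finset.Icc 1 m,
            Set.indicator (E i k) (fun _ => ((k : ℝ))⁻¹) ω := by
      funext ω
      rw [fdp_pointwise hm hα0' (hq0 ω) I0]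
      refine Finset.sum_congr rfl fun i _ => Finset.sum_congr rfl fun k _ => ?_
      simp only [hEdef, Set.indicator_apply, Set.mem_inter_iff, Set.mem_setOf_eq]
    rw [hptw2]
    rw [integral_finset_sum _ (fun i _ => integrable_finset_sum _
      (fun k _ => (integrable_const _).indicator (hEmeas i k)))]
    refine Finset.sum_congr rfl fun i _ => ?_
    rw [integral_finset_sum _ (fun k _ => (integrable_const _).indicator (hEmeas i k))]
    refine Finset.sum_congr rfl fun k _ => ?_
    rw [integral_indicator_const _ (hEmeas i k), smul_eq_mul, measureReal_def]
  rw [key]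
  -- bound each summand
  have hbound : ∀ i ∈ I0, ∑ k ∈ Finset.Icc 1 m, (μ (E i k)).toReal * ((k : ℝ))⁻¹
      ≤ α / m := by
    intro i hi
    have hsum_meas : ∑ k ∈ Finset.Icc 1 m,
        (μ {ω | suR (bh m α) (Function.update (p ω) i 0) = k}).toReal ≤ 1 := by
      have hdisjB : (Finset.Icc 1 m : Set ℕ).PairwiseDisjoint
          (fun k => {ω | suR (bh m α) (Function.update (p ω) i 0) = k}) := by
        intro a _ b _ hab
        refine Set.disjoint_left.2 fun ω ha hb => ?_
        exact hab (ha.symm.trans hb)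
      have hBmeas : ∀ k ∈ Finset.Icc 1 m,
          MeasurableSet {ω | suR (bh m α) (Function.update (p ω) i 0) = k} :=
        fun k _ => (hWmeas i) (measurableSet_singleton k)
      have hsum : ∑ k ∈ Finset.Icc 1 m,
          μ {ω | suR (bh m α) (Function.update (p ω) i 0) = k}
          = μ (⋃ k ∈ Finset.Icc 1 m,
              {ω | suR (bh m α) (Function.update (p ω) i 0) = k}) :=
        (measure_biUnion_finset hdisjB hBmeas).symm
      have h1 : μ (⋃ k ∈ Finset.Icc 1 m,
          {ω | suR (bh m α) (Function.update (p ω) i 0) = k}) ≤ 1 := prob_le_one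
      calc ∑ k ∈ Finset.Icc 1 m,
            (μ {ω | suR (bh m α) (Function.update (p ω) i 0) = k}).toReal
          = (∑ k ∈ Finset.Icc 1 m,
            μ {ω | suR (bh m α) (Function.update (p ω) i 0) = k}).toReal := by
            rw [ENNReal.toReal_sum]
            exact fun k _ => measure_ne_top μ _
        _ ≤ (1 : ENNReal).toReal := by
            refine ENNReal.toReal_mono ENNReal.one_ne_top ?_
            rw [hsum]
            exact h1
        _ = 1 := by simp
    calc ∑ k ∈ Finset.Icc 1 m, (μ (E i k)).toReal * ((k : ℝ))⁻¹
        ≤ ∑ k ∈ Finset.Icc 1 m, (α / m) *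
            (μ {ω | suR (bh m α) (Function.update (p ω) i 0) = k}).toReal := by
          refine Finset.sum_le_sum fun k hk => ?_
          rw [Finset.mem_Icc] at hk
          have hk1 : (1:ℕ) ≤ k := hk.1
          have hkm : k ≤ m := hk.2
          have hbk0 : 0 ≤ bh m α k := bh_nonneg hα0' k
          have hbk1 : bh m α k ≤ 1 := by
            have h1 : bh m α k ≤ α := by
              unfold bh
              rw [div_le_iff₀ (by positivity : (0:ℝ) < m)]
              have : (k : ℝ) ≤ (m : ℝ) := by exact_mod_cast hkm
              nlinarith
            linarith
          have hmul : μ (E i k) = μ {ω | p ω i ≤ bh m α k} *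
              μ {ω | suR (bh m α) (Function.update (p ω) i 0) = k} := by
            have := (hindep i hi).measure_inter_preimage_eq_mul
              (Set.Iic (bh m α k)) {k} measurableSet_Iic (measurableSet_singleton k)
            exact this
          have hstoch' : μ {ω | p ω i ≤ bh m α k} ≤ ENNReal.ofReal (bh m α k) :=
            hstoch i hi _ ⟨hbk0, hbk1⟩
          have hEle : (μ (E i k)).toReal ≤ (bh m α k) *
              (μ {ω | suR (bh m α) (Function.update (p ω) i 0) = k}).toReal := by
            rw [hmul]
            have hle : μ {ω | p ω i ≤ bh m α k} *
                μ {ω | suR (bh m α) (Function.update (p ω) i 0) = k}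
                ≤ ENNReal.ofReal (bh m α k) *
                μ {ω | suR (bh m α) (Function.update (p ω) i 0) = k} :=
              mul_le_mul_left hstoch' _
            calc (μ {ω | p ω i ≤ bh m α k} *
                μ {ω | suR (bh m α) (Function.update (p ω) i 0) = k}).toReal
                ≤ (ENNReal.ofReal (bh m α k) *
                  μ {ω | suR (bh m α) (Function.update (p ω) i 0) = k}).toReal := by
                  refine ENNReal.toReal_mono ?_ hle
                  exact ENNReal.mul_ne_top ENNReal.ofReal_ne_top (measure_ne_top μ _)
              _ = (bh m α k) *
                  (μ {ω | suR (bh m α) (Function.update (p ω) i 0) = k}).toReal := by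
                  rw [ENNReal.toReal_mul, ENNReal.toReal_ofReal hbk0]
          have hkpos : (0:ℝ) < (k : ℝ) := by exact_mod_cast hk1
          calc (μ (E i k)).toReal * ((k : ℝ))⁻¹
              ≤ ((bh m α k) *
                (μ {ω | suR (bh m α) (Function.update (p ω) i 0) = k}).toReal) * ((k : ℝ))⁻¹ := by
                refine mul_le_mul_of_nonneg_right hEle (by positivity)
            _ = (α / m) *
                (μ {ω | suR (bh m α) (Function.update (p ω) i 0) = k}).toReal := by
                unfold bh
                field_simp
      _ = (α / m) * ∑ k ∈ Finset.Icc 1 m,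
            (μ {ω | suR (bh m α) (Function.update (p ω) i 0) = k}).toReal := by
          rw [Finset.mul_sum]
      _ ≤ (α / m) * 1 := by
          refine mul_le_mul_of_nonneg_left hsum_meas (by positivity)
      _ = α / m := mul_one _
  calc ∑ i ∈ I0, ∑ k ∈ Finset.Icc 1 m, (μ (E i k)).toReal * ((k : ℝ))⁻¹
      ≤ ∑ _i ∈ I0, α / m := Finset.sum_le_sum hbound
    _ = (I0.card : ℝ) * (α / m) := by rw [Finset.sum_const, nsmul_eq_mul]
    _ = (I0.card : ℝ) / m * α := by ring
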